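/- Under assumptions A1–A4 with n_0^{(s)} = n^{(s)} = m fixed (m ≥ 2), the term I₂ = (m/N^{(s)}) (X̄_0 − μ̂_0^{(s)})² converges to 0 in probability as s → ∞. -/

import Mathlib

open MeasureTheory ProbabilityTheory Filter Finset BoundedContinuousFunction
open scoped NNReal Topology
open Real

noncomputable section


/-- The sample mean of the first `n` observations of the sequence `x`. -/
def sampleMean (x : ℕ → ℝ) (n : ℕ) : ℝ := (∑ j ∈ Finset.range n, x j) / n

/-- Vector of sample means: population `0` has sample size `n0`, every other population
has sample size `nn`.  `X i j` is the `j`-th observation from population `i`. -/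
def xbarVec (n0 nn : ℕ) (X : ℕ → ℕ → ℝ) (i : ℕ) : ℝ :=
  sampleMean (X i) (if i = 0 then n0 else nn)

/-- Tree-order restricted MLE of the control mean `μ₀`:
`μ̂₀ = min_{I ⊆ {1,…,s}} (n₀ X̄₀ + Σ_{i∈I} n X̄ᵢ) / (n₀ + n |I|)` (the minimum includes `I = ∅`). -/
def treeMLE0 (n0 nn s : ℕ) (xbar : ℕ → ℝ) : ℝ :=
  ((Finset.Icc 1 s).powerset).inf' (Finset.powerset_nonempty _)
    fun I => ((n0 : ℝ) * xbar 0 + ∑ i ∈ I, (nn : ℝ) * xbar i)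
      / ((n0 : ℝ) + (nn : ℝ) * I.card)

/-- Tree-order restricted MLE of the `i`-th treatment mean (`1 ≤ i ≤ s`):
`μ̂ᵢ = max (μ̂₀, X̄ᵢ)`. -/
def treeMLE (n0 nn s : ℕ) (xbar : ℕ → ℝ) (i : ℕ) : ℝ :=
  max (treeMLE0 n0 nn s xbar) (xbar i)

/-- Tree-order restricted MLE of the common variance `σ²`. -/
def sigmaHat (n0 nn s : ℕ) (X : ℕ → ℕ → ℝ) : ℝ :=
  (∑ j ∈ Finset.range n0, (X 0 j - treeMLE0 n0 nn s (xbarVec n0 nn X)) ^ 2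
    + ∑ i ∈ Finset.Icc 1 s, ∑ j ∈ Finset.range nn,
        (X i j - treeMLE n0 nn s (xbarVec n0 nn X) i) ^ 2)
    / ((n0 + s * nn : ℕ) : ℝ)

lemma integrable_rexp_quadratic' {b : ℝ} (hb : 0 < b) (c : ℝ) :
    Integrable fun x : ℝ => exp (-b * x ^ 2 + c * x) := by
  have h : ∀ x : ℝ, -b * x ^ 2 + c * x = -b * (x + (-c / (2 * b))) ^ 2 + c ^ 2 / (4 * b) := by
    intro x; field_simp; ring
  simp_rw [h, exp_add]
  exact (((integrable_exp_neg_mul_sq hb).comp_add_right _)).mul_const _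

lemma integral_rexp_quadratic' {b : ℝ} (hb : 0 < b) (c : ℝ) :
    ∫ x : ℝ, exp (-b * x ^ 2 + c * x) = Real.sqrt (π / b) * exp (c ^ 2 / (4 * b)) := by
  have h : ∀ x : ℝ, -b * x ^ 2 + c * x = -b * (x + (-c / (2 * b))) ^ 2 + c ^ 2 / (4 * b) := by
    intro x; field_simp; ring
  simp_rw [h, exp_add]
  rw [integral_mul_const]
  congr 1
  rw [integral_add_right_eq_self (fun x => exp (-b * x ^ 2)) (-c / (2 * b))]
  exact integral_gaussian b

lemma exp_mul_gaussianPDFReal (μ0 : ℝ) {v : ℝ≥0} (hv : (0:ℝ) < v) (t x : ℝ) :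
    exp (t * x) * gaussianPDFReal μ0 v x
      = (Real.sqrt (2 * π * v))⁻¹ * (exp (-(2*(v:ℝ))⁻¹ * x ^ 2 + (t + μ0 / v) * x) * exp (-μ0^2/(2*v))) := by
  rw [gaussianPDFReal, mul_comm (rexp (t*x)), mul_assoc, ← Real.exp_add]
  congr 1
  rw [← Real.exp_add, Real.exp_eq_exp]
  field_simp
  ring

lemma integrable_exp_mul_gaussian (μ0 : ℝ) {v : ℝ≥0} (hv : v ≠ 0) (t : ℝ) :
    Integrable (fun x => exp (t * x)) (gaussianReal μ0 v) := by
  have hvpos : (0:ℝ) < v := lt_of_le_of_ne v.coe_nonneg (by exact_mod_cast hv.symm)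
  rw [gaussianReal_of_var_ne_zero _ hv, gaussianPDF_def,
    integrable_withDensity_iff ((measurable_gaussianPDFReal _ _).ennreal_ofReal)
      (Eventually.of_forall fun _ => ENNReal.ofReal_lt_top)]
  have heq : ∀ x : ℝ, exp (t * x) * (ENNReal.ofReal (gaussianPDFReal μ0 v x)).toReal
      = (Real.sqrt (2 * π * v))⁻¹ * (exp (-(2*(v:ℝ))⁻¹ * x ^ 2 + (t + μ0 / v) * x) * exp (-μ0^2/(2*v))) := by
    intro x
    rw [ENNReal.toReal_ofReal (gaussianPDFReal_nonneg _ _ _)]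
    exact exp_mul_gaussianPDFReal μ0 hvpos t x
  simp_rw [heq]
  exact ((integrable_rexp_quadratic' (by positivity) _).mul_const _).const_mul _

lemma mgf_gaussian' {Ω : Type*} [MeasurableSpace Ω] {P : Measure Ω} {X : Ω → ℝ}
    (hX : Measurable X) {μ0 : ℝ} {v : ℝ≥0} (hv : v ≠ 0)
    (hmap : Measure.map X P = gaussianReal μ0 v) (t : ℝ) :
    mgf X P t = exp (μ0 * t + v * t ^ 2 / 2) := by
  have hvpos : (0:ℝ) < v := lt_of_le_of_ne v.coe_nonneg (by exact_mod_cast hv.symm)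
  have h1 : mgf X P t = ∫ x, exp (t * x) ∂(gaussianReal μ0 v) := by
    rw [mgf, ← hmap, integral_map hX.aemeasurable]
    exact (measurable_const_mul t).exp.aestronglyMeasurable
  rw [h1, gaussianReal_of_var_ne_zero _ hv, gaussianPDF_def]
  have hd : (fun x => ENNReal.ofReal (gaussianPDFReal μ0 v x))
      = fun x => ((gaussianPDFReal μ0 v x).toNNReal : ENNReal) := rfl
  rw [hd, integral_withDensity_eq_integral_smul
    (f := fun x => (gaussianPDFReal μ0 v x).toNNReal)
    ((measurable_gaussianPDFReal _ _).real_toNNReal) _]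
  have heq : ∀ x : ℝ, (gaussianPDFReal μ0 v x).toNNReal • exp (t * x)
      = (Real.sqrt (2 * π * v))⁻¹ * (exp (-(2*(v:ℝ))⁻¹ * x ^ 2 + (t + μ0 / v) * x) * exp (-μ0^2/(2*v))) := by
    intro x
    rw [NNReal.smul_def, smul_eq_mul, Real.coe_toNNReal _ (gaussianPDFReal_nonneg _ _ _),
      mul_comm]
    exact exp_mul_gaussianPDFReal μ0 hvpos t x
  simp_rw [heq]
  rw [integral_const_mul, integral_mul_const, integral_rexp_quadratic' (by positivity)]
  have hπ : π / ((2*(v:ℝ))⁻¹) = 2 * π * v := by field_simp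
  rw [hπ, mul_assoc (Real.sqrt (2 * π * (v:ℝ))), ← Real.exp_add, ← mul_assoc,
    inv_mul_cancel₀ (Real.sqrt_pos.2 (by positivity)).ne', one_mul, Real.exp_eq_exp]
  field_simp
  ring

lemma treeMLE0_le_xbar0 {n0 nn s : ℕ} (hn0 : 0 < n0) (xbar : ℕ → ℝ) :
    treeMLE0 n0 nn s xbar ≤ xbar 0 := by
  unfold treeMLE0
  refine le_trans (Finset.inf'_le _ (Finset.empty_mem_powerset _)) (le_of_eq ?_)
  rw [Finset.sum_empty, Finset.card_empty]
  push_cast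
  rw [add_zero, mul_zero, add_zero]
  have : (n0:ℝ) ≠ 0 := by exact_mod_cast hn0.ne'
  field_simp

lemma exists_bad_index {n0 nn s : ℕ} (hn0 : 0 < n0) (hnn : 0 < nn) {xbar : ℕ → ℝ} {t : ℝ}
    (ht : 0 < t) (h : t ≤ xbar 0 - treeMLE0 n0 nn s xbar) :
    ∃ i ∈ Finset.Icc 1 s, t ≤ xbar 0 - xbar i := by
  obtain ⟨i0, hi0mem, hi0min⟩ := Finset.exists_min_image (insert 0 (Finset.Icc 1 s)) xbar
    ⟨0, Finset.mem_insert_self _ _⟩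
  have hlow : xbar i0 ≤ treeMLE0 n0 nn s xbar := by
    apply Finset.le_inf'
    intro I hI
    rw [Finset.mem_powerset] at hI
    have hden : (0:ℝ) < (n0:ℝ) + (nn:ℝ) * I.card := by positivity
    rw [le_div_iff₀ hden]
    have h1 : (n0:ℝ) * xbar i0 ≤ (n0:ℝ) * xbar 0 :=
      mul_le_mul_of_nonneg_left (hi0min 0 (Finset.mem_insert_self _ _)) (by positivity)
    have h2 : ∑ i ∈ I, (nn:ℝ) * xbar i0 ≤ ∑ i ∈ I, (nn:ℝ) * xbar i :=
      Finset.sum_le_sum fun i hi => mul_le_mul_of_nonneg_left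
        (hi0min i (Finset.mem_insert_of_mem (hI hi))) (by positivity)
    calc xbar i0 * ((n0:ℝ) + (nn:ℝ) * I.card)
        = (n0:ℝ) * xbar i0 + ∑ _i ∈ I, (nn:ℝ) * xbar i0 := by
          rw [Finset.sum_const, nsmul_eq_mul]; ring
      _ ≤ (n0:ℝ) * xbar 0 + ∑ i ∈ I, (nn:ℝ) * xbar i := add_le_add h1 h2
  rcases Finset.mem_insert.1 hi0mem with h0 | hmem
  · exfalso
    have : t ≤ xbar 0 - xbar i0 := le_trans h (by linarith)
    rw [h0] at this
    simp at this
    linarith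
  · exact ⟨i0, hmem, le_trans h (by linarith)⟩

/-- Under A1–A4 with all sample sizes equal to a fixed `m ≥ 2`, the term
`I₂ = (m/N⁽ˢ⁾)(X̄₀ − μ̂₀⁽ˢ⁾)²` (with `N⁽ˢ⁾ = m(s+1)`) converges to `0` in probability. -/
theorem I2_tendsto_zero_in_probability
    {Ω : Type*} [MeasurableSpace Ω] (P : Measure Ω) [IsProbabilityMeasure P]
    (μ : ℕ → ℝ) (v : ℝ≥0) (hv : v ≠ 0)
    (m : ℕ) (hm : 2 ≤ m)
    -- A1: tree order restriction
    (hA1 : ∀ i, 1 ≤ i → μ 0 ≤ μ i)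
    -- A2: uniformly bounded means
    (hA2 : ∃ B > 0, ∀ i, μ i ≤ B)
    -- A3: independent normal observations, common variance v
    (X : ℕ → ℕ → Ω → ℝ)
    (hmeas : ∀ i j, Measurable (X i j))
    (hindep : iIndepFun (fun p : ℕ × ℕ => X p.1 p.2) P)
    (hdist : ∀ i j, Measure.map (X i j) P = gaussianReal (μ i) v)
    :
    ∀ ε : ℝ, 0 < ε →
      Tendsto (fun s : ℕ =>
          P {ω | ε ≤ |(m : ℝ) / ((m : ℝ) * ((s : ℝ) + 1)) *
              (sampleMean (fun j => X 0 j ω) m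
                - treeMLE0 m m s (xbarVec m m fun i j => X i j ω)) ^ 2|})
        atTop (𝓝 0) := by
  intro ε hε
  have hm0 : (0:ℝ) < m := by exact_mod_cast lt_of_lt_of_le (by norm_num) hm
  have hmne : (m:ℝ) ≠ 0 := hm0.ne'
  have hv0 : (0:ℝ) < v := lt_of_le_of_ne v.coe_nonneg (by exact_mod_cast hv.symm)
  set K : ℝ := (m:ℝ) * ε / (4 * v) with hK
  have hKpos : 0 < K := by positivity
  set ts : ℕ → ℝ := fun s => Real.sqrt (ε * ((s:ℝ) + 1)) with hts
  have htspos : ∀ s : ℕ, 0 < ts s := fun s => Real.sqrt_pos.2 (by positivity)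
  have hts2 : ∀ s : ℕ, ts s ^ 2 = ε * ((s:ℝ)+1) := fun s => Real.sq_sqrt (by positivity)
  -- tail bound for each pair (s, i)
  have tail : ∀ s : ℕ, ∀ i ∈ Finset.Icc 1 s,
      P {ω | ts s ≤ sampleMean (fun j => X 0 j ω) m - sampleMean (fun j => X i j ω) m}
        ≤ ENNReal.ofReal (Real.exp (-K * ((s:ℝ)+1))) := by
    intro s i hi
    have hi1 : 1 ≤ i := (Finset.mem_Icc.1 hi).1
    have hine : i ≠ 0 := by omega
    set cs : ℝ := (m:ℝ) * ts s / (2 * v) with hcs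
    have hcs0 : 0 ≤ cs := by positivity
    set cp : ℕ × ℕ → ℝ := fun p => if p.1 = 0 then ((m:ℝ))⁻¹ else -((m:ℝ))⁻¹ with hcp
    set Z : ℕ × ℕ → Ω → ℝ := fun p ω => cp p * X p.1 p.2 ω with hZ
    have hZmeas : ∀ p, Measurable (Z p) := fun p => (hmeas p.1 p.2).const_mul _
    have hZindep : iIndepFun Z P :=
      hindep.comp (fun p (x : ℝ) => cp p * x) (fun p => measurable_id.const_mul _)
    set S : Finset (ℕ × ℕ) := ({0, i} : Finset ℕ) ×ˢ Finset.range m with hS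
    have h0i : (0:ℕ) ∉ ({i} : Finset ℕ) := by simp [eq_comm, hine]
    have hsum : (∑ p ∈ S, Z p) = fun ω =>
        sampleMean (fun j => X 0 j ω) m - sampleMean (fun j => X i j ω) m := by
      funext ω
      rw [Finset.sum_apply, hS, Finset.sum_product]
      rw [show ({0, i} : Finset ℕ) = insert 0 {i} from rfl,
        Finset.sum_insert h0i, Finset.sum_singleton]
      simp only [hZ, hcp, hine, if_true, if_false, ite_true, ite_false, reduceIte]
      have e0 : ∀ (y : ℕ → ℝ), (∑ j ∈ Finset.range m, (m:ℝ)⁻¹ * y j)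
          = (∑ j ∈ Finset.range m, y j) / m := by
        intro y; rw [← Finset.mul_sum, inv_mul_eq_div]
      have e1 : (∑ j ∈ Finset.range m, -(m:ℝ)⁻¹ * X i j ω)
          = -((∑ j ∈ Finset.range m, X i j ω) / m) := by
        simp_rw [neg_mul]
        rw [Finset.sum_neg_distrib, e0]
      rw [e0, e1, sampleMean, sampleMean]
      ring
    have hintZ : ∀ p ∈ S, Integrable (fun ω => Real.exp (cs * Z p ω)) P := by
      intro p _
      have hfe : (fun ω => Real.exp (cs * Z p ω))
          = (fun x => Real.exp ((cs * cp p) * x)) ∘ (X p.1 p.2) := by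
        funext ω
        simp only [hZ, Function.comp]
        congr 1
        ring
      rw [hfe]
      have hig := integrable_exp_mul_gaussian (μ p.1) hv (cs * cp p)
      rw [← hdist p.1 p.2] at hig
      exact (integrable_map_measure
        ((measurable_id.const_mul _).exp.aestronglyMeasurable)
        (hmeas p.1 p.2).aemeasurable).1 hig
    have hintD : Integrable (fun ω => Real.exp (cs * (∑ p ∈ S, Z p) ω)) P :=
      hZindep.integrable_exp_mul_sum hZmeas hintZ
    have hmgfZ : ∀ p, mgf (Z p) P cs
        = Real.exp (μ p.1 * (cs * cp p) + v * (cs * cp p)^2 / 2) := by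
      intro p
      have h1 : mgf (Z p) P cs = mgf (X p.1 p.2) P (cs * cp p) := by
        simp only [mgf]
        congr 1
        funext ω
        congr 1
        simp only [hZ]
        ring
      rw [h1, mgf_gaussian' (hmeas _ _) hv (hdist _ _)]
    have hmgfD : mgf (∑ p ∈ S, Z p) P cs
        = Real.exp (cs * (μ 0 - μ i) + v * cs^2 / m) := by
      rw [hZindep.mgf_sum hZmeas S]
      rw [Finset.prod_congr rfl (fun p _ => hmgfZ p), ← Real.exp_sum]
      congr 1
      rw [hS, Finset.sum_product]
      rw [show ({0, i} : Finset ℕ) = insert 0 {i} from rfl,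
        Finset.sum_insert h0i, Finset.sum_singleton]
      simp only [hcp, hine, if_true, if_false, ite_true, ite_false, reduceIte]
      rw [Finset.sum_const, Finset.sum_const, Finset.card_range, nsmul_eq_mul, nsmul_eq_mul]
      field_simp
      ring
    have hch := measure_ge_le_exp_mul_mgf (μ := P) (X := ∑ p ∈ S, Z p) (ts s) hcs0 hintD
    rw [hmgfD, ← Real.exp_add] at hch
    have hexp_le : -cs * ts s + (cs * (μ 0 - μ i) + v * cs^2 / m) ≤ -K * ((s:ℝ)+1) := by
      have hμ : μ 0 - μ i ≤ 0 := sub_nonpos.2 (hA1 i hi1)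
      have h1 : cs * (μ 0 - μ i) ≤ 0 := mul_nonpos_of_nonneg_of_nonpos hcs0 hμ
      have h2 : -cs * ts s + (v:ℝ) * cs^2 / m = -K * ((s:ℝ)+1) := by
        have hr : -K * ((s:ℝ)+1) = -((m:ℝ)/(4*v)) * (ts s)^2 := by
          rw [hts2 s, hK]; field_simp
        rw [hr, hcs]
        field_simp
        ring
      linarith
    have hch2 : (P {ω | ts s ≤ (∑ p ∈ S, Z p) ω}).toReal
        ≤ Real.exp (-K * ((s:ℝ)+1)) :=
      le_trans hch (Real.exp_le_exp.2 hexp_le)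
    rw [hsum] at hch2
    calc P {ω | ts s ≤ sampleMean (fun j => X 0 j ω) m - sampleMean (fun j => X i j ω) m}
        = ENNReal.ofReal ((P {ω | ts s ≤ sampleMean (fun j => X 0 j ω) m
            - sampleMean (fun j => X i j ω) m}).toReal) :=
          (ENNReal.ofReal_toReal (measure_ne_top _ _)).symm
      _ ≤ ENNReal.ofReal (Real.exp (-K * ((s:ℝ)+1))) := ENNReal.ofReal_le_ofReal hch2
  -- inclusion into the union of tail events
  have hsub : ∀ s : ℕ, {ω | ε ≤ |(m : ℝ) / ((m : ℝ) * ((s : ℝ) + 1)) *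
              (sampleMean (fun j => X 0 j ω) m
                - treeMLE0 m m s (xbarVec m m fun i j => X i j ω)) ^ 2|}
        ⊆ ⋃ i ∈ Finset.Icc 1 s, {ω | ts s ≤ sampleMean (fun j => X 0 j ω) m
            - sampleMean (fun j => X i j ω) m} := by
    intro s ω hω
    simp only [Set.mem_setOf_eq] at hω
    have hxb0 : (xbarVec m m fun i j => X i j ω) 0 = sampleMean (fun j => X 0 j ω) m := by
      simp [xbarVec]
    set d := sampleMean (fun j => X 0 j ω) m
      - treeMLE0 m m s (xbarVec m m fun i j => X i j ω) with hd
    have hd0 : 0 ≤ d := by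
      rw [hd, ← hxb0]
      exact sub_nonneg.2 (treeMLE0_le_xbar0 (by omega) _)
    have hcoef : (m : ℝ) / ((m : ℝ) * ((s : ℝ) + 1)) = (((s:ℝ)+1))⁻¹ := by
      field_simp
    rw [hcoef] at hω
    rw [abs_of_nonneg (by positivity)] at hω
    have hs1 : (0:ℝ) < (s:ℝ)+1 := by positivity
    have hsq : ε * ((s:ℝ)+1) ≤ d ^ 2 := by
      calc ε * ((s:ℝ)+1) ≤ (((s:ℝ)+1)⁻¹ * d^2) * ((s:ℝ)+1) :=
            mul_le_mul_of_nonneg_right hω hs1.le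
        _ = d^2 := by field_simp
    have htd : ts s ≤ d := by
      calc ts s ≤ Real.sqrt (d^2) := Real.sqrt_le_sqrt hsq
        _ = d := Real.sqrt_sq hd0
    obtain ⟨i, hi, hti⟩ := exists_bad_index (n0 := m) (nn := m) (s := s)
      (xbar := xbarVec m m fun i j => X i j ω)
      (by omega) (by omega) (htspos s)
      (by rw [hxb0]; exact htd)
    have hxbi : (xbarVec m m fun i j => X i j ω) i = sampleMean (fun j => X i j ω) m := by
      have : i ≠ 0 := by have := (Finset.mem_Icc.1 hi).1; omega
      simp [xbarVec, this]
    refine Set.mem_biUnion hi ?_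
    simp only [Set.mem_setOf_eq]
    rw [hxb0, hxbi] at hti
    exact hti
  -- combine
  have hb : ∀ s : ℕ, P {ω | ε ≤ |(m : ℝ) / ((m : ℝ) * ((s : ℝ) + 1)) *
              (sampleMean (fun j => X 0 j ω) m
                - treeMLE0 m m s (xbarVec m m fun i j => X i j ω)) ^ 2|}
        ≤ ENNReal.ofReal ((s:ℝ) * Real.exp (-K * ((s:ℝ)+1))) := by
    intro s
    calc P {ω | ε ≤ |(m : ℝ) / ((m : ℝ) * ((s : ℝ) + 1)) *
              (sampleMean (fun j => X 0 j ω) m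
                - treeMLE0 m m s (xbarVec m m fun i j => X i j ω)) ^ 2|}
        ≤ P (⋃ i ∈ Finset.Icc 1 s, {ω | ts s ≤ sampleMean (fun j => X 0 j ω) m
            - sampleMean (fun j => X i j ω) m}) := measure_mono (hsub s)
      _ ≤ ∑ i ∈ Finset.Icc 1 s, P {ω | ts s ≤ sampleMean (fun j => X 0 j ω) m
            - sampleMean (fun j => X i j ω) m} := measure_biUnion_finset_le _ _
      _ ≤ ∑ _i ∈ Finset.Icc 1 s, ENNReal.ofReal (Real.exp (-K * ((s:ℝ)+1))) :=
          Finset.sum_le_sum (tail s)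
      _ = (Finset.Icc 1 s).card • ENNReal.ofReal (Real.exp (-K * ((s:ℝ)+1))) :=
          Finset.sum_const _
      _ = ENNReal.ofReal ((s:ℝ) * Real.exp (-K * ((s:ℝ)+1))) := by
          rw [Nat.card_Icc, Nat.add_sub_cancel, nsmul_eq_mul, ← ENNReal.ofReal_natCast,
            ← ENNReal.ofReal_mul (by positivity)]
  -- the upper bound tends to zero
  have hreal : Tendsto (fun s : ℕ => (s:ℝ) * Real.exp (-K * ((s:ℝ)+1))) atTop (𝓝 0) := by
    have hg : Tendsto (fun x : ℝ => x * Real.exp (-x)) atTop (𝓝 0) := by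
      simpa using Real.tendsto_pow_mul_exp_neg_atTop_nhds_zero 1
    have harg : Tendsto (fun s : ℕ => K * ((s:ℝ)+1)) atTop atTop := by
      apply Tendsto.const_mul_atTop hKpos
      exact tendsto_atTop_add_const_right _ 1 tendsto_natCast_atTop_atTop
    have h2 := hg.comp harg
    have h3 : Tendsto (fun s : ℕ =>
        K⁻¹ * (K * ((s:ℝ)+1) * Real.exp (-(K * ((s:ℝ)+1))))) atTop (𝓝 0) := by
      simpa using h2.const_mul K⁻¹
    refine squeeze_zero (fun s => by positivity) (fun s => ?_) h3
    have hle : (s:ℝ) * Real.exp (-K * ((s:ℝ)+1)) ≤ ((s:ℝ)+1) * Real.exp (-K * ((s:ℝ)+1)) :=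
      mul_le_mul_of_nonneg_right (by linarith) (Real.exp_pos _).le
    refine le_trans hle (le_of_eq ?_)
    rw [show -(K * ((s:ℝ)+1)) = -K * ((s:ℝ)+1) from by ring]
    rw [← mul_assoc, ← mul_assoc, inv_mul_cancel₀ hKpos.ne', one_mul]
  have hupper : Tendsto (fun s : ℕ =>
      ENNReal.ofReal ((s:ℝ) * Real.exp (-K * ((s:ℝ)+1)))) atTop (𝓝 0) := by
    simpa using ENNReal.tendsto_ofReal hreal
  exact tendsto_of_tendsto_of_tendsto_of_le_of_le tendsto_const_nhds hupper
    (fun s => zero_le) hb
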